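/- Let Λ be a commutative unital ring and C a small category. Let K = colim_{n∈ℕ} K^{(n)} be a sequential colimit of unbounded chain complexes of presheaves of Λ-modules on C such that each K^{(n)} is projective cofibrant and bounded below, and each transition morphism K^{(n)} → K^{(n+1)} is a split monomorphism in every degree. Then K is projective cofibrant: 0 → K has the left lifting property with respect to every degreewise-epimorphic quasi-isomorphism. -/

import Mathlib

open CategoryTheory CategoryTheory.Limits ZeroObject

universe u

/-- The category of presheaves of `Λ`-modules on a small category `C`. -/
abbrev PSh (Λ : Type u) [CommRing Λ] (C : Type u) [SmallCategory C] :=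
  Cᵒᵖ ⥤ ModuleCat.{u} Λ

variable (Λ : Type u) [CommRing Λ] (C : Type u) [SmallCategory C]

/-- A morphism of complexes is a trivial fibration if it is a degreewise
epimorphism and a quasi-isomorphism. -/
def IsTrivialFibration {K K' : ChainComplex (PSh Λ C) ℤ} (f : K ⟶ K') : Prop :=
  (∀ n : ℤ, Epi (f.f n)) ∧ QuasiIso f

/-- A complex `K` is projective cofibrant if `0 ⟶ K` has the left lifting property
with respect to all trivial fibrations. -/
def IsProjectiveCofibrant (K : ChainComplex (PSh Λ C) ℤ) : Prop :=
  ∀ ⦃X Y : ChainComplex (PSh Λ C) ℤ⦄ (p : X ⟶ Y), IsTrivialFibration Λ C p →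
    HasLiftingProperty (0 : (0 : ChainComplex (PSh Λ C) ℤ) ⟶ K) p

/-- A presheaf `F` is projective if `Hom(F, -) : PSh(C,Λ) ⥤ Mod_Λ` is an exact functor,
i.e. preserves finite limits and finite colimits. -/
def IsProjectivePresheaf (F : PSh Λ C) : Prop :=
  Nonempty (PreservesFiniteLimits ((linearCoyoneda Λ (PSh Λ C)).obj (Opposite.op F))) ∧
  Nonempty (PreservesFiniteColimits ((linearCoyoneda Λ (PSh Λ C)).obj (Opposite.op F)))

namespace Statement10Aux

open HomologicalComplex

variable {V : Type*} [Category V] [Abelian V]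

noncomputable section

/-- The degreewise kernel complex of a morphism of complexes. -/
def kerCx {M N : ChainComplex V ℤ} (p : M ⟶ N) : ChainComplex V ℤ where
  X i := kernel (p.f i)
  d i j := kernel.lift (p.f j) (kernel.ι (p.f i) ≫ M.d i j)
    (by rw [Category.assoc, ← p.comm i j, kernel.condition_assoc, zero_comp])
  shape i j hij := by
    rw [← cancel_mono (kernel.ι (p.f j)), kernel.lift_ι, M.shape i j hij, comp_zero, zero_comp]
  d_comp_d' i j k _ _ := by
    rw [← cancel_mono (kernel.ι (p.f k))]
    simp

/-- The inclusion of the kernel complex. -/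
def kerι {M N : ChainComplex V ℤ} (p : M ⟶ N) : kerCx p ⟶ M where
  f i := kernel.ι (p.f i)
  comm' i j _ := by simp [kerCx]

lemma kerι_comp {M N : ChainComplex V ℤ} (p : M ⟶ N) : kerι p ≫ p = 0 := by
  ext i
  simp [kerι]
  exact kernel.condition _

/-- Factorization through the kernel complex. -/
def kerLift {M N A : ChainComplex V ℤ} (p : M ⟶ N) (e : A ⟶ M) (he : e ≫ p = 0) :
    A ⟶ kerCx p where
  f i := kernel.lift (p.f i) (e.f i)
    (by rw [← comp_f, he, zero_f])
  comm' i j _ := by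
    apply (cancel_mono (kernel.ι (p.f j))).1
    simp [kerCx, e.comm i j]

lemma kerLift_ι {M N A : ChainComplex V ℤ} (p : M ⟶ N) (e : A ⟶ M) (he : e ≫ p = 0) :
    kerLift p e he ≫ kerι p = e := by
  ext i
  simp [kerLift, kerι]
  exact kernel.lift_ι _ _ _

lemma isIso_of_isZero {X Y : V} (f : X ⟶ Y) (hX : IsZero X) (hY : IsZero Y) : IsIso f :=
  ⟨0, hX.eq_of_src _ _, hY.eq_of_src _ _⟩

/-- The kernel complex of a degreewise-epi quasi-isomorphism is acyclic. -/
lemma kerCx_acyclic {M N : ChainComplex V ℤ} (p : M ⟶ N) (hp : ∀ n : ℤ, Epi (p.f n))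
    [QuasiIso p] (n : ℤ) : IsZero ((kerCx p).homology n) := by
  let S : ShortComplex (ChainComplex V ℤ) := ShortComplex.mk (kerι p) p (kerι_comp p)
  have hS : S.ShortExact := by
    apply HomologicalComplex.shortExact_of_degreewise_shortExact
    intro i
    exact { exact := ShortComplex.exact_of_f_is_kernel _ (kernelIsKernel (p.f i)),
            mono_f := (inferInstance : Mono (kernel.ι (p.f i))),
            epi_g := hp i }
  have hrel : (ComplexShape.down ℤ).Rel (n + 1) n := rfl
  haveI h2 : IsIso (homologyMap p (n + 1)) :=
    (quasiIsoAt_iff_isIso_homologyMap p (n + 1)).1 inferInstance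
  haveI h3 : IsIso (homologyMap p n) :=
    (quasiIsoAt_iff_isIso_homologyMap p n).1 inferInstance
  have hδ : hS.δ (n + 1) n hrel = 0 := by
    rw [← cancel_epi (homologyMap p (n + 1))]
    rw [comp_zero]; exact hS.comp_δ (n + 1) n hrel
  have hf : homologyMap (kerι p) n = 0 := by
    rw [← cancel_mono (homologyMap p n), zero_comp, ← homologyMap_comp, kerι_comp,
      homologyMap_zero]
  exact (hS.homology_exact₁ (n + 1) n hrel).isZero_X₂ hδ hf

/-- A short complex with a contraction is exact. -/
lemma exact_of_contraction (S : ShortComplex V) (s : S.X₂ ⟶ S.X₁) (t : S.X₃ ⟶ S.X₂)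
    (hst : s ≫ S.f + S.g ≫ t = 𝟙 S.X₂) : S.Exact := by
  rw [S.exact_iff_epi_toCycles]
  have h : (S.iCycles ≫ s) ≫ S.toCycles = 𝟙 S.cycles := by
    rw [← cancel_mono S.iCycles]
    rw [Category.assoc, Category.assoc, S.toCycles_i, Category.id_comp]
    have : S.iCycles ≫ s ≫ S.f = S.iCycles ≫ (s ≫ S.f + S.g ≫ t) := by
      rw [Preadditive.comp_add, ← Category.assoc, ← Category.assoc, S.iCycles_g, zero_comp,
        add_zero]
    rw [this, hst, Category.comp_id]
  haveI : IsSplitEpi S.toCycles := ⟨⟨⟨S.iCycles ≫ s, h⟩⟩⟩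
  infer_instance

/-- The "path/contractible" complex on `Z` : degreewise `Z.X n ⊞ Z.X (n+1)`,
`d (x, z) = (dx, x - dz)`. -/
def pathCx (Z : ChainComplex V ℤ) : ChainComplex V ℤ :=
  ChainComplex.of (fun n => Z.X n ⊞ Z.X (n + 1))
    (fun n => biprod.desc (biprod.lift (Z.d (n + 1) n) (𝟙 (Z.X (n + 1))))
      (biprod.lift 0 (-Z.d (n + 1 + 1) (n + 1))))
    (fun n => by ext <;> simp)

lemma pathCx_exactAt (Z : ChainComplex V ℤ) (n : ℤ) : (pathCx Z).ExactAt n := by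
  obtain ⟨m, rfl⟩ : ∃ m, n = m + 1 := ⟨n - 1, by omega⟩
  rw [HomologicalComplex.exactAt_iff' _ (m + 1 + 1) (m + 1) m
    (by simp) (by rw [ChainComplex.next]; omega)]
  apply exact_of_contraction _ (biprod.snd ≫ biprod.inl) (biprod.snd ≫ biprod.inl)
  have H : (biprod.snd ≫ biprod.inl : Z.X (m + 1) ⊞ Z.X (m + 1 + 1) ⟶ Z.X (m + 1 + 1) ⊞ Z.X (m + 1 + 1 + 1)) ≫
      biprod.desc (biprod.lift (Z.d (m + 1 + 1) (m + 1)) (𝟙 _)) (biprod.lift 0 (-Z.d (m + 1 + 1 + 1) (m + 1 + 1))) +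
      biprod.desc (biprod.lift (Z.d (m + 1) m) (𝟙 _)) (biprod.lift 0 (-Z.d (m + 1 + 1) (m + 1))) ≫
      (biprod.snd ≫ biprod.inl : Z.X m ⊞ Z.X (m + 1) ⟶ Z.X (m + 1) ⊞ Z.X (m + 1 + 1)) = 𝟙 _ := by
    ext <;> simp
  dsimp [HomologicalComplex.sc', HomologicalComplex.shortComplexFunctor', pathCx]
  rw [ChainComplex.of_d, ChainComplex.of_d]
  exact H

lemma pathCx_homology_isZero (Z : ChainComplex V ℤ) (n : ℤ) :
    IsZero ((pathCx Z).homology n) :=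
  (HomologicalComplex.exactAt_iff_isZero_homology _ _).1 (pathCx_exactAt Z n)

/-- The projection from the path complex. -/
def pathπ (Z : ChainComplex V ℤ) : pathCx Z ⟶ Z where
  f i := biprod.fst
  comm' i j hij := by
    obtain rfl : j + 1 = i := hij
    dsimp [pathCx]
    rw [ChainComplex.of_d]
    ext <;> simp

lemma pathπ_f_epi (Z : ChainComplex V ℤ) (i : ℤ) : Epi ((pathπ Z).f i) := by
  haveI : IsSplitEpi ((pathπ Z).f i) := ⟨⟨⟨biprod.inl, biprod.inl_fst⟩⟩⟩
  infer_instance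

lemma pathπ_quasiIso (Z : ChainComplex V ℤ) (hZ : ∀ n : ℤ, IsZero (Z.homology n)) :
    QuasiIso (pathπ Z) := by
  refine ⟨fun n => ?_⟩
  rw [quasiIsoAt_iff_isIso_homologyMap]
  exact isIso_of_isZero _ (pathCx_homology_isZero Z n) (hZ n)

/-- Reformulated cofibrancy: every map to the target of a trivial fibration lifts. -/
def CofLike (A : ChainComplex V ℤ) : Prop :=
  ∀ ⦃X Y : ChainComplex V ℤ⦄ (p : X ⟶ Y), (∀ n : ℤ, Epi (p.f n)) → QuasiIso p →
    ∀ g : A ⟶ Y, ∃ l : A ⟶ X, l ≫ p = g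

/-- The key relative lifting lemma: a degreewise split monomorphism between
`CofLike` complexes has the left lifting property against trivial fibrations. -/
lemma step_lift {A B X Y : ChainComplex V ℤ} (hA : CofLike A) (hB : CofLike B)
    (ι : A ⟶ B) (hι : ∀ i : ℤ, IsSplitMono (ι.f i))
    (p : X ⟶ Y) (hp : ∀ n : ℤ, Epi (p.f n)) (hq : QuasiIso p)
    (g : A ⟶ X) (f : B ⟶ Y) (w : g ≫ p = ι ≫ f) :
    ∃ l : B ⟶ X, ι ≫ l = g ∧ l ≫ p = f := by
  haveI := hq
  obtain ⟨l₀, hl₀⟩ := hB p hp hq f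
  set e₀ : A ⟶ X := g - ι ≫ l₀ with he₀def
  have he₀ : e₀ ≫ p = 0 := by
    rw [he₀def, Preadditive.sub_comp, w, Category.assoc, hl₀, sub_self]
  set Z : ChainComplex V ℤ := kerCx p with hZdef
  have hZ : ∀ n : ℤ, IsZero (Z.homology n) := kerCx_acyclic p hp
  set etil : A ⟶ Z := kerLift p e₀ he₀ with hetildef
  haveI := pathπ_quasiIso Z hZ
  obtain ⟨F, hF⟩ := hA (pathπ Z) (pathπ_f_epi Z) inferInstance etil
  set h : ∀ i : ℤ, A.X i ⟶ Z.X (i + 1) := fun i => F.f i ≫ biprod.snd with hdef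
  -- the fundamental degreewise identity
  have key : ∀ j : ℤ, etil.f (j + 1) =
      A.d (j + 1) j ≫ h j + h (j + 1) ≫ Z.d (j + 1 + 1) (j + 1) := by
    intro j
    have e1 : F.f (j + 1) ≫ (pathCx Z).d (j + 1) j ≫ biprod.snd =
        A.d (j + 1) j ≫ h j := by
      erw [← Category.assoc, F.comm (j + 1) j, Category.assoc]
    have e2 : (pathCx Z).d (j + 1) j ≫ (biprod.snd : _ ⟶ Z.X (j + 1)) =
        biprod.fst - biprod.snd ≫ Z.d (j + 1 + 1) (j + 1) := by
      dsimp [pathCx]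
      rw [ChainComplex.of_d]
      ext <;> simp
    rw [e2] at e1
    have e3 : etil.f (j + 1) = F.f (j + 1) ≫ biprod.fst := by
      have := congrArg (fun φ => HomologicalComplex.Hom.f φ (j + 1)) hF
      dsimp [pathπ] at this
      rw [this]
    have e5 : h (j + 1) = F.f (j + 1) ≫ biprod.snd := rfl
    rw [e3, e5, ← e1]
    erw [Preadditive.comp_sub, Category.assoc, sub_add_cancel]
  -- extend the null-homotopy along the degreewise split mono
  set H : ∀ i j : ℤ, (ComplexShape.down ℤ).Rel j i → (B.X i ⟶ Z.X j) := fun i j hij =>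
    (haveI := hι i; retraction (ι.f i)) ≫ h i ≫ eqToHom (congrArg Z.X (hij : i + 1 = j))
    with hHdef
  set e' : B ⟶ Z := Homotopy.nullHomotopicMap' H with he'def
  have hkey2 : ι ≫ e' = etil := by
    rw [he'def, Homotopy.comp_nullHomotopicMap']
    ext i
    obtain ⟨j, rfl⟩ : ∃ j, i = j + 1 := ⟨i - 1, by omega⟩
    rw [Homotopy.nullHomotopicMap'_f (show (ComplexShape.down ℤ).Rel (j + 1 + 1) (j + 1) from rfl)
      (show (ComplexShape.down ℤ).Rel (j + 1) j from rfl)]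
    rw [key j]
    simp only [hHdef, eqToHom_refl, Category.comp_id]
    haveI := hι j; haveI := hι (j + 1)
    rw [← Category.assoc (ι.f j), IsSplitMono.id, Category.id_comp,
      ← Category.assoc (ι.f (j + 1)), IsSplitMono.id, Category.id_comp]
  refine ⟨l₀ + e' ≫ kerι p, ?_, ?_⟩
  · rw [Preadditive.comp_add, ← Category.assoc, hkey2, hetildef, kerLift_ι, he₀def]
    abel
  · rw [Preadditive.add_comp, hl₀, Category.assoc, kerι_comp, comp_zero, add_zero]

end

end Statement10Aux


/-- Let `K` be the colimit of a sequential diagram of complexes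
`K⁽ⁿ⁾`, each projective cofibrant and bounded below, with transition morphisms
that are split monomorphisms in every degree. Then `K` is projective cofibrant. -/
theorem isProjectiveCofibrant_of_sequential_colimit
    (D : ℕ ⥤ ChainComplex (PSh Λ C) ℤ)
    (hcof : ∀ n : ℕ, IsProjectiveCofibrant Λ C (D.obj n))
    (hbdd : ∀ n : ℕ, ∃ N : ℤ, ∀ i < N, Limits.IsZero ((D.obj n).X i))
    (hsplit : ∀ (n : ℕ) (i : ℤ), IsSplitMono ((D.map (homOfLE (Nat.le_succ n))).f i))
    (K : ChainComplex (PSh Λ C) ℤ) (cc : Limits.Cocone D) (hcc : Limits.IsColimit cc)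
    (hK : K = cc.pt) :
    IsProjectiveCofibrant Λ C K := by
  subst hK
  intro X Y p hp
  haveI := hp.2
  have hcl : ∀ n : ℕ, Statement10Aux.CofLike (D.obj n) := by
    intro n X' Y' q hq1 hq2 g
    haveI := hcof n q ⟨hq1, hq2⟩
    have sq : CommSq (0 : (0 : ChainComplex (PSh Λ C) ℤ) ⟶ X')
        (0 : (0 : ChainComplex (PSh Λ C) ℤ) ⟶ D.obj n) q g :=
      ⟨(Limits.isZero_zero _).eq_of_src _ _⟩
    exact ⟨sq.lift, sq.fac_right⟩
  refine ⟨fun {top bot} sq => ?_⟩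
  have base : ∃ l : D.obj 0 ⟶ X, l ≫ p = cc.ι.app 0 ≫ bot := hcl 0 p hp.1 hp.2 _
  have stepex : ∀ (n : ℕ) (gn : D.obj n ⟶ X), gn ≫ p = cc.ι.app n ≫ bot →
      ∃ g' : D.obj (n + 1) ⟶ X, D.map (homOfLE (Nat.le_succ n)) ≫ g' = gn ∧
        g' ≫ p = cc.ι.app (n + 1) ≫ bot := by
    intro n gn hgn
    have w : gn ≫ p = D.map (homOfLE (Nat.le_succ n)) ≫ cc.ι.app (n + 1) ≫ bot := by
      rw [hgn]
      conv_rhs => rw [← Category.assoc, cc.w (homOfLE (Nat.le_succ n))]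
    exact Statement10Aux.step_lift (hcl n) (hcl (n + 1))
      (D.map (homOfLE (Nat.le_succ n))) (hsplit n) p hp.1 hp.2 gn (cc.ι.app (n + 1) ≫ bot) w
  let stepf : ∀ n : ℕ, {gn : D.obj n ⟶ X // gn ≫ p = cc.ι.app n ≫ bot} →
      {gn : D.obj (n + 1) ⟶ X // gn ≫ p = cc.ι.app (n + 1) ≫ bot} := fun n gn =>
    ⟨(stepex n gn.1 gn.2).choose, (stepex n gn.1 gn.2).choose_spec.2⟩
  let G : ∀ n : ℕ, {gn : D.obj n ⟶ X // gn ≫ p = cc.ι.app n ≫ bot} := fun n =>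
    Nat.rec ⟨base.choose, base.choose_spec⟩ (fun n ih => stepf n ih) n
  have hGsucc : ∀ n : ℕ, D.map (homOfLE (Nat.le_succ n)) ≫ (G (n + 1)).1 = (G n).1 :=
    fun n => (stepex n (G n).1 (G n).2).choose_spec.1
  have hGle : ∀ (n m : ℕ) (hnm : n ≤ m), D.map (homOfLE hnm) ≫ (G m).1 = (G n).1 := by
    intro n m hnm
    induction hnm with
    | refl =>
        have : (homOfLE (le_refl n) : n ⟶ n) = 𝟙 n := rfl
        have h2 : (homOfLE (Nat.le.refl : n ≤ n) : n ⟶ n) = 𝟙 n := Subsingleton.elim _ _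
        rw [h2, D.map_id, Category.id_comp]
    | @step m h ih =>
        have heq : (homOfLE (Nat.le.step h) : (n : ℕ) ⟶ (m + 1 : ℕ)) =
            homOfLE h ≫ homOfLE (Nat.le_succ m) := Subsingleton.elim _ _
        rw [heq, D.map_comp, Category.assoc, hGsucc m, ih]
  let E : Limits.Cocone D :=
    ⟨X, { app := fun n => (G n).1,
          naturality := by
            intro n m f'
            have hf' : f' = homOfLE (leOfHom f') := Subsingleton.elim _ _
            rw [hf']
            simpa using hGle n m (leOfHom f') }⟩
  exact ⟨⟨{ l := hcc.desc E
            fac_left := (Limits.isZero_zero _).eq_of_src _ _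
            fac_right := by
              apply hcc.hom_ext
              intro n
              rw [← Category.assoc, hcc.fac E n]
              exact (G n).2 }⟩⟩
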